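/- arXiv:1407.0457 — 2 statements merged into one kernel-verified Lean document; each statement's English description precedes it below -/
import Mathlib

section
/- Let E be a normed vector space, X a topological space, Z a topological space, and q : E × X → Z a continuous surjection such that q(ξ, x) = q(η, y) implies x = y; let θ : Z → X denote the induced base-point map (so θ(q(ξ, x)) = x for all ξ ∈ E, x ∈ X), and define N : Z → ℝ by N(z) = inf{‖ξ‖ : ξ ∈ E with q(ξ, θ(z)) = z}. Let x₀ ∈ X, let l be a filter on an index set ι, and let b : ι → Z be such that N(b(i)) tends to 0 along l and θ(b(i)) tends to x₀ along l. Then b(i) tends to q(0, x₀) along l. -/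
/-- Lemma 4.11 (abstract form): in a fibrewise quotient `q : E × X → Z` of a trivial
normed bundle (with base-point map `θ` and fibre norm `N`), any net whose fibre norms
tend to `0` and whose base points tend to `x₀` converges to the zero element
`q (0, x₀)` of the fibre over `x₀`. -/
theorem tendsto_zero_section_of_fibre_norm_tendsto_zero
    {E X Z : Type*} [NormedAddCommGroup E] [TopologicalSpace X] [TopologicalSpace Z]
    (q : E × X → Z) (hqc : Continuous q) (hqs : Function.Surjective q)
    (hfib : ∀ (ξ η : E) (x y : X), q (ξ, x) = q (η, y) → x = y)
    (θ : Z → X) (hθ : ∀ (ξ : E) (x : X), θ (q (ξ, x)) = x)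
    (N : Z → ℝ)
    (hN : ∀ z : Z, N z = sInf {r : ℝ | ∃ ξ : E, q (ξ, θ z) = z ∧ ‖ξ‖ = r})
    {ι : Type*} (l : Filter ι) (b : ι → Z) (x₀ : X)
    (hNb : Filter.Tendsto (fun i => N (b i)) l (nhds 0))
    (hθb : Filter.Tendsto (fun i => θ (b i)) l (nhds x₀)) :
    Filter.Tendsto b l (nhds (q (0, x₀))) := by
  rw [Filter.tendsto_def]
  intro U hU
  obtain ⟨V, hVU, hVopen, hmemV⟩ := mem_nhds_iff.mp hU
  have hpre : IsOpen (q ⁻¹' V) := hVopen.preimage hqc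
  obtain ⟨s, t, hs, ht, h0s, hx0t, hst⟩ :=
    isOpen_prod_iff.mp hpre 0 x₀ hmemV
  obtain ⟨ε, hε, hball⟩ := Metric.isOpen_iff.mp hs 0 h0s
  have h1 : ∀ᶠ i in l, N (b i) < ε := hNb.eventually (gt_mem_nhds hε)
  have h2 : ∀ᶠ i in l, θ (b i) ∈ t := hθb.eventually (ht.mem_nhds hx0t)
  filter_upwards [h1, h2] with i hNi hti
  -- the fibre set over b i
  have hne : Set.Nonempty {r : ℝ | ∃ ξ : E, q (ξ, θ (b i)) = b i ∧ ‖ξ‖ = r} := by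
    obtain ⟨⟨ξ, x⟩, hξ⟩ := hqs (b i)
    have hx : θ (b i) = x := by rw [← hξ, hθ]
    exact ⟨‖ξ‖, ξ, by rw [hx, hξ], rfl⟩
  have hbdd : BddBelow {r : ℝ | ∃ ξ : E, q (ξ, θ (b i)) = b i ∧ ‖ξ‖ = r} :=
    ⟨0, fun r ⟨ξ, _, hr⟩ => hr ▸ norm_nonneg ξ⟩
  have hlt : sInf {r : ℝ | ∃ ξ : E, q (ξ, θ (b i)) = b i ∧ ‖ξ‖ = r} < ε := by
    rw [← hN (b i)]; exact hNi
  obtain ⟨r, ⟨ξ, hqξ, hrξ⟩, hrε⟩ := (csInf_lt_iff hbdd hne).mp hlt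
  have hmem : (ξ, θ (b i)) ∈ s ×ˢ t := by
    refine ⟨hball ?_, hti⟩
    simpa [Metric.mem_ball, hrξ] using hrε
  have := hst hmem
  rw [Set.mem_preimage, hqξ] at this
  exact hVU this
end

section
/- For all x, y, s ∈ G one has 𝓗_{xs, ys} = 𝓗_{x,y} (equality of linear spans, and consequently of their closures). In particular the subspaces 𝓗_{x,y}, and hence the quotient spaces 𝒜_{x,y} = (E ⊗ F)/𝓗_{x,y}, depend only on the right coset of (x, y) under the diagonal subgroup Δ = {(s, s) : s ∈ G} of G × G. -/
open TensorProduct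

/-- The subspace `𝓗_{x,y}` of `E ⊗ F`: the span of the elements
`π^x(b) ξ ⊗ η − ξ ⊗ σ^y(b⁻¹) η` for `b ∈ H^x ∩ K^y` (where `H^x = x⁻¹Hx`,
`π^x(b) = π(xbx⁻¹)`, `K^y = y⁻¹Ky`, `σ^y(c) = σ(ycy⁻¹)`). -/
def Hxy {G E F : Type*} [Group G] [AddCommGroup E] [Module ℂ E]
    [AddCommGroup F] [Module ℂ F] (H K : Subgroup G)
    (π : H →* (E ≃ₗ[ℂ] E)) (σ : K →* (F ≃ₗ[ℂ] F)) (x y : G) :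
    Submodule ℂ (E ⊗[ℂ] F) :=
  Submodule.span ℂ
    { t | ∃ (b : G) (hbH : x * b * x⁻¹ ∈ H) (hbK : y * b * y⁻¹ ∈ K) (ξ : E) (η : F),
        t = (π ⟨x * b * x⁻¹, hbH⟩ ξ) ⊗ₜ[ℂ] η
            - ξ ⊗ₜ[ℂ] (σ (⟨y * b * y⁻¹, hbK⟩⁻¹) η) }

/-- Proposition 4.4: `𝓗_{xs,ys} = 𝓗_{x,y}` for all `x, y, s ∈ G`; hence the
subspaces `𝓗_{x,y}`, and the quotients `𝒜_{x,y} = (E ⊗ F)/𝓗_{x,y}`, depend only on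
the right coset of `(x, y)` under the diagonal subgroup of `G × G`. -/
theorem Hxy_mul_right_eq {G E F : Type*} [Group G] [AddCommGroup E] [Module ℂ E]
    [AddCommGroup F] [Module ℂ F] (H K : Subgroup G)
    (π : H →* (E ≃ₗ[ℂ] E)) (σ : K →* (F ≃ₗ[ℂ] F)) (x y s : G) :
    Hxy H K π σ (x * s) (y * s) = Hxy H K π σ x y := by
  unfold Hxy
  congr 1
  ext t
  constructor
  · rintro ⟨b, hbH, hbK, ξ, η, rfl⟩
    have e1 : x * (s * b * s⁻¹) * x⁻¹ = x * s * b * (x * s)⁻¹ := by group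
    have e2 : y * (s * b * s⁻¹) * y⁻¹ = y * s * b * (y * s)⁻¹ := by group
    refine ⟨s * b * s⁻¹, e1 ▸ hbH, e2 ▸ hbK, ξ, η, ?_⟩
    have h1 : (⟨x * (s * b * s⁻¹) * x⁻¹, e1 ▸ hbH⟩ : H) = ⟨x * s * b * (x * s)⁻¹, hbH⟩ :=
      Subtype.ext e1
    have h2 : (⟨y * (s * b * s⁻¹) * y⁻¹, e2 ▸ hbK⟩ : K) = ⟨y * s * b * (y * s)⁻¹, hbK⟩ :=
      Subtype.ext e2
    rw [h1, h2]
  · rintro ⟨b, hbH, hbK, ξ, η, rfl⟩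
    have e1 : x * s * (s⁻¹ * b * s) * (x * s)⁻¹ = x * b * x⁻¹ := by group
    have e2 : y * s * (s⁻¹ * b * s) * (y * s)⁻¹ = y * b * y⁻¹ := by group
    refine ⟨s⁻¹ * b * s, e1 ▸ hbH, e2 ▸ hbK, ξ, η, ?_⟩
    have h1 : (⟨x * s * (s⁻¹ * b * s) * (x * s)⁻¹, e1 ▸ hbH⟩ : H) = ⟨x * b * x⁻¹, hbH⟩ :=
      Subtype.ext e1
    have h2 : (⟨y * s * (s⁻¹ * b * s) * (y * s)⁻¹, e2 ▸ hbK⟩ : K) = ⟨y * b * y⁻¹, hbK⟩ :=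
      Subtype.ext e2
    rw [h1, h2]
end
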